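/- For m = 3, the subgraph H_i of S_n □ K_{1,3} induced by the edge sets a_i ∪ b_i ∪ b'_i ∪ c_i ∪ t_i ∪ t_{i+1} ∪ t_{i-1} is homeomorphic to the complete tripartite graph K_{1,3,3}. -/

import Mathlib

open SimpleGraph

/-- A drawing of a simple graph in the plane: vertices are placed at distinct
points, and each edge is drawn as a simple continuous arc between the points
of its endpoints, avoiding all vertex points in its interior. -/
structure Drawing {V : Type*} (G : SimpleGraph V) where
  vertexPos : V → ℝ × ℝ
  vertexPos_inj : Function.Injective vertexPos
  arc : G.edgeSet → ℝ → ℝ × ℝ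
  arc_cont : ∀ e, ContinuousOn (arc e) (Set.Icc 0 1)
  arc_inj : ∀ e, Set.InjOn (arc e) (Set.Icc 0 1)
  arc_ends : ∀ e : G.edgeSet, ∃ x y : V, (e : Sym2 V) = s(x, y) ∧
      arc e 0 = vertexPos x ∧ arc e 1 = vertexPos y
  arc_avoid : ∀ e : G.edgeSet, ∀ t ∈ Set.Ioo (0:ℝ) 1, ∀ x : V, arc e t ≠ vertexPos x

namespace Drawing

variable {V : Type*} {G : SimpleGraph V} (D : Drawing G)

/-- Ordered crossing data of a drawing: an ordered pair of distinct edges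
together with a point interior to both of their arcs.  Each unordered
crossing point is hence recorded exactly twice. -/
def crossSet : Set ((G.edgeSet × G.edgeSet) × (ℝ × ℝ)) :=
  {x | x.1.1 ≠ x.1.2 ∧
    (∃ t ∈ Set.Ioo (0:ℝ) 1, D.arc x.1.1 t = x.2) ∧
    (∃ t ∈ Set.Ioo (0:ℝ) 1, D.arc x.1.2 t = x.2)}

/-- The crossing data involving at least one edge from the edge set `A`. -/
def crossSetOn (A : Set (Sym2 V)) : Set ((G.edgeSet × G.edgeSet) × (ℝ × ℝ)) :=
  {x | x ∈ D.crossSet ∧ ((x.1.1 : Sym2 V) ∈ A ∨ (x.1.2 : Sym2 V) ∈ A)}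

/-- A crossing-free drawing. -/
def CrossingFree : Prop := D.crossSet = ∅

/-- A good drawing: any two edges meet in at most one interior point, and
edges sharing an endpoint have no common interior point. -/
def IsGood : Prop :=
  (∀ e f : G.edgeSet, {p : ℝ × ℝ | ((e, f), p) ∈ D.crossSet}.Subsingleton) ∧
  (∀ e f : G.edgeSet, (∃ v : V, v ∈ (e : Sym2 V) ∧ v ∈ (f : Sym2 V)) →
    {p : ℝ × ℝ | ((e, f), p) ∈ D.crossSet} = ∅)

end Drawing

/-- A graph is planar if it admits a crossing-free drawing in the plane. -/
def IsPlanarGraph {V : Type*} (G : SimpleGraph V) : Prop :=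
  ∃ D : Drawing G, D.CrossingFree

/-- The crossing number of a graph: the least `n` such that some drawing of
`G` has exactly `n` crossings (recall `crossSet` counts every crossing twice). -/
noncomputable def crossingNumber {V : Type*} (G : SimpleGraph V) : ℕ :=
  sInf {n : ℕ | ∃ D : Drawing G, D.crossSet.Finite ∧ D.crossSet.ncard = 2 * n}

/-- The Sunlet graph on `2n` vertices: the vertex `(i, false)` is the cycle
vertex `uᵢ`, and `(i, true)` is the pendant vertex `u'ᵢ` attached to `uᵢ`. -/
def sunlet (n : ℕ) : SimpleGraph (Fin n × Bool) :=
  SimpleGraph.fromRel (fun x y =>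
    (x.2 = false ∧ y.2 = false ∧ (y.1 : ℕ) = ((x.1 : ℕ) + 1) % n) ∨
    (x.2 = false ∧ y.2 = true ∧ x.1 = y.1))

/-- The star `K_{1,m}`: `Sum.inl 0` is the centre and `Sum.inr j` the leaves. -/
def starGraph (m : ℕ) : SimpleGraph (Fin 1 ⊕ Fin m) :=
  completeBipartiteGraph (Fin 1) (Fin m)

/-- The cycle graph on `n` vertices. -/
def cycleGraph' (n : ℕ) : SimpleGraph (Fin n) :=
  SimpleGraph.fromRel (fun x y => (y : ℕ) = ((x : ℕ) + 1) % n)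

/-- A bundled graph. -/
structure GraphB where
  V : Type
  G : SimpleGraph V

/-- The graph obtained from `G` by subdividing the edge `{a, b}` via the new
vertex `none`. -/
def subdivideEdge {V : Type*} (G : SimpleGraph V) (a b : V) : SimpleGraph (Option V) :=
  SimpleGraph.fromRel (fun x y =>
    (x = none ∧ (y = some a ∨ y = some b)) ∨
    (∃ u v : V, x = some u ∧ y = some v ∧ G.Adj u v ∧ s(u, v) ≠ s(a, b)))

/-- `B` is obtained from `A` by subdividing a single edge (up to isomorphism). -/
def SubdivStep (A B : GraphB) : Prop :=
  ∃ a b : A.V, A.G.Adj a b ∧ Nonempty (B.G ≃g subdivideEdge A.G a b)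

/-- Two graphs are homeomorphic if they are related by the equivalence closure
of single-edge subdivisions together with graph isomorphism. -/
def Homeo : GraphB → GraphB → Prop :=
  Relation.EqvGen (fun A B => SubdivStep A B ∨ Nonempty (A.G ≃g B.G))

/-- The cyclic successor of `i : Fin n`. -/
def finSucc {n : ℕ} (i : Fin n) : Fin n := i + ⟨1 % n, Nat.mod_lt 1 i.pos⟩

/-- The cyclic predecessor of `i : Fin n`. -/
def finPred {n : ℕ} (i : Fin n) : Fin n := i - ⟨1 % n, Nat.mod_lt 1 i.pos⟩

/-- The edge set `aᵢ` of `Sₙ □ K_{1,m}`: edges from column `i` to column `i+1`. -/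
def aSet (n m : ℕ) (i : Fin n) : Set (Sym2 ((Fin n × Bool) × (Fin 1 ⊕ Fin m))) :=
  {e | ∃ v : Fin 1 ⊕ Fin m, e = s(((i, false), v), ((finSucc i, false), v))}

/-- The edge set `cᵢ`: edges from column `i` to column `i-1`. -/
def cSet (n m : ℕ) (i : Fin n) : Set (Sym2 ((Fin n × Bool) × (Fin 1 ⊕ Fin m))) :=
  {e | ∃ v : Fin 1 ⊕ Fin m, e = s(((i, false), v), ((finPred i, false), v))}

/-- The edge set `bᵢ`: pendant edges from `uᵢ`-copies to `u'ᵢ`-copies. -/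
def bSet (n m : ℕ) (i : Fin n) : Set (Sym2 ((Fin n × Bool) × (Fin 1 ⊕ Fin m))) :=
  {e | ∃ v : Fin 1 ⊕ Fin m, e = s(((i, false), v), ((i, true), v))}

/-- The edge set `b'ᵢ`: the star edges in the pendant column `u'ᵢ`. -/
def bpSet (n m : ℕ) (i : Fin n) : Set (Sym2 ((Fin n × Bool) × (Fin 1 ⊕ Fin m))) :=
  {e | ∃ j : Fin m, e = s(((i, true), Sum.inl 0), ((i, true), Sum.inr j))}

/-- The edge set `tₖ`: the star edges in the cycle column `uₖ`. -/
def tSet (n m : ℕ) (k : Fin n) : Set (Sym2 ((Fin n × Bool) × (Fin 1 ⊕ Fin m))) :=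
  {e | ∃ j : Fin m, e = s(((k, false), Sum.inl 0), ((k, false), Sum.inr j))}


section Aux

instance decFromRel {V : Type*} [DecidableEq V] (r : V → V → Prop) [DecidableRel r] :
    DecidableRel (SimpleGraph.fromRel r).Adj := fun a b =>
  decidable_of_iff' _ (SimpleGraph.fromRel_adj r a b)

instance (priority := 2000) fastSym2Eq {V : Type*} [DecidableEq V] (u v a b : V) :
    Decidable (s(u,v) = s(a,b)) := decidable_of_iff _ Sym2.eq_iff.symm

instance (priority := 2000) fastExists2 {V : Type*} (x y : Option V) (Q : V → V → Prop)
    [∀ u v, Decidable (Q u v)] :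
    Decidable (∃ u v : V, x = some u ∧ y = some v ∧ Q u v) :=
  match x, y with
  | some u, some v => decidable_of_iff (Q u v)
      ⟨fun h => ⟨u, v, rfl, rfl, h⟩, by rintro ⟨u', v', h1, h2, h⟩; cases h1; cases h2; exact h⟩
  | some _, none => isFalse (by rintro ⟨u', v', h1, h2, h⟩; cases h2)
  | none, _ => isFalse (by rintro ⟨u', v', h1, h2, h⟩; cases h1)

instance decSubdiv {V : Type*} [DecidableEq V] (G : SimpleGraph V)
    [DecidableRel G.Adj] (a b : V) : DecidableRel (subdivideEdge G a b).Adj := by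
  unfold subdivideEdge; infer_instance

abbrev gl {k : ℕ} (l : List (ℕ × ℕ)) : SimpleGraph (Fin k) :=
  SimpleGraph.fromRel (fun a b => (a.val, b.val) ∈ l)

def lastEquiv (k : ℕ) : Fin (k+1) ≃ Option (Fin k) where
  toFun x := if h : x.val < k then some ⟨x.val, h⟩ else none
  invFun o := o.elim ⟨k, Nat.lt_succ_self k⟩ (fun y => ⟨y.val, Nat.lt_succ_of_lt y.isLt⟩)
  left_inv x := by
    rcases x with ⟨x, hx⟩
    by_cases h : x < k <;> simp [h, Option.elim]; omega
  right_inv o := by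
    rcases o with _ | ⟨y, hy⟩ <;> simp [Option.elim]; simp [hy]

abbrev GG7 : SimpleGraph (Fin 7) := gl [(0,1),(0,2),(0,3),(0,4),(0,5),(0,6),(3,6),(2,6),(1,6),(3,5),(2,5),(1,5),(3,4),(2,4),(1,4)]
abbrev GG8 : SimpleGraph (Fin 8) := gl [(0,1),(0,2),(0,3),(0,4),(0,5),(0,6),(1,7),(4,7),(3,6),(2,6),(1,6),(3,5),(2,5),(1,5),(3,4),(2,4)]
abbrev GG9 : SimpleGraph (Fin 9) := gl [(0,1),(0,2),(0,3),(0,4),(0,5),(0,6),(1,7),(2,8),(4,7),(4,8),(3,6),(2,6),(1,6),(3,5),(2,5),(1,5),(3,4)]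
abbrev GG10 : SimpleGraph (Fin 10) := gl [(0,1),(0,2),(0,3),(0,4),(0,5),(0,6),(1,7),(2,8),(3,9),(4,7),(4,8),(4,9),(3,6),(2,6),(1,6),(3,5),(2,5),(1,5)]
abbrev GG11 : SimpleGraph (Fin 11) := gl [(0,1),(0,2),(0,3),(0,4),(0,5),(0,6),(1,7),(2,8),(3,9),(4,7),(4,8),(4,9),(1,10),(5,10),(3,6),(2,6),(1,6),(3,5),(2,5)]
abbrev GG12 : SimpleGraph (Fin 12) := gl [(0,1),(0,2),(0,3),(0,4),(0,5),(0,6),(1,7),(2,8),(3,9),(4,7),(4,8),(4,9),(1,10),(2,11),(5,10),(5,11),(3,6),(2,6),(1,6),(3,5)]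
abbrev GG13 : SimpleGraph (Fin 13) := gl [(0,1),(0,2),(0,3),(0,4),(0,5),(0,6),(1,7),(2,8),(3,9),(4,7),(4,8),(4,9),(1,10),(2,11),(3,12),(5,10),(5,11),(5,12),(3,6),(2,6),(1,6)]
abbrev GG14 : SimpleGraph (Fin 14) := gl [(0,1),(0,2),(0,3),(0,4),(0,5),(0,6),(1,7),(2,8),(3,9),(4,7),(4,8),(4,9),(1,10),(2,11),(3,12),(5,10),(5,11),(5,12),(1,13),(6,13),(3,6),(2,6)]
abbrev GG15 : SimpleGraph (Fin 15) := gl [(0,1),(0,2),(0,3),(0,4),(0,5),(0,6),(1,7),(2,8),(3,9),(4,7),(4,8),(4,9),(1,10),(2,11),(3,12),(5,10),(5,11),(5,12),(1,13),(2,14),(6,13),(6,14),(3,6)]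
abbrev GG16 : SimpleGraph (Fin 16) := gl [(0,1),(0,2),(0,3),(0,4),(0,5),(0,6),(1,7),(2,8),(3,9),(4,7),(4,8),(4,9),(1,10),(2,11),(3,12),(5,10),(5,11),(5,12),(1,13),(2,14),(3,15),(6,13),(6,14),(6,15)]

set_option maxRecDepth 10000 in
lemma step16 : SubdivStep ⟨Fin 15, GG15⟩ ⟨Fin 16, GG16⟩ :=
  ⟨3, 6, by decide, ⟨⟨lastEquiv 15, by decide⟩⟩⟩
set_option maxRecDepth 10000 in
lemma step15 : SubdivStep ⟨Fin 14, GG14⟩ ⟨Fin 15, GG15⟩ :=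
  ⟨2, 6, by decide, ⟨⟨lastEquiv 14, by decide⟩⟩⟩
set_option maxRecDepth 10000 in
lemma step14 : SubdivStep ⟨Fin 13, GG13⟩ ⟨Fin 14, GG14⟩ :=
  ⟨1, 6, by decide, ⟨⟨lastEquiv 13, by decide⟩⟩⟩
set_option maxRecDepth 10000 in
lemma step13 : SubdivStep ⟨Fin 12, GG12⟩ ⟨Fin 13, GG13⟩ :=
  ⟨3, 5, by decide, ⟨⟨lastEquiv 12, by decide⟩⟩⟩
set_option maxRecDepth 10000 in
lemma step12 : SubdivStep ⟨Fin 11, GG11⟩ ⟨Fin 12, GG12⟩ :=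
  ⟨2, 5, by decide, ⟨⟨lastEquiv 11, by decide⟩⟩⟩
set_option maxRecDepth 10000 in
lemma step11 : SubdivStep ⟨Fin 10, GG10⟩ ⟨Fin 11, GG11⟩ :=
  ⟨1, 5, by decide, ⟨⟨lastEquiv 10, by decide⟩⟩⟩
set_option maxRecDepth 10000 in
lemma step10 : SubdivStep ⟨Fin 9, GG9⟩ ⟨Fin 10, GG10⟩ :=
  ⟨3, 4, by decide, ⟨⟨lastEquiv 9, by decide⟩⟩⟩
set_option maxRecDepth 10000 in
lemma step9 : SubdivStep ⟨Fin 8, GG8⟩ ⟨Fin 9, GG9⟩ :=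
  ⟨2, 4, by decide, ⟨⟨lastEquiv 8, by decide⟩⟩⟩
set_option maxRecDepth 10000 in
lemma step8 : SubdivStep ⟨Fin 7, GG7⟩ ⟨Fin 8, GG8⟩ :=
  ⟨1, 4, by decide, ⟨⟨lastEquiv 7, by decide⟩⟩⟩

abbrev MM : Fin 3 → Type := ![Fin 1, Fin 3, Fin 3]

instance MMdeq : ∀ j : Fin 3, DecidableEq (MM j) := fun j =>
  match j with
  | 0 => inferInstanceAs (DecidableEq (Fin 1))
  | 1 => inferInstanceAs (DecidableEq (Fin 3))
  | 2 => inferInstanceAs (DecidableEq (Fin 3))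

instance MMfin : ∀ j : Fin 3, Fintype (MM j) := fun j =>
  match j with
  | 0 => inferInstanceAs (Fintype (Fin 1))
  | 1 => inferInstanceAs (Fintype (Fin 3))
  | 2 => inferInstanceAs (Fintype (Fin 3))

abbrev K133 : SimpleGraph ((j : Fin 3) × MM j) := SimpleGraph.completeMultipartiteGraph MM

instance decK133 : DecidableRel K133.Adj := fun v w =>
  inferInstanceAs (Decidable (v.1 ≠ w.1))

def ef : Fin 7 → (j : Fin 3) × MM j
  | 0 => ⟨0, (0 : Fin 1)⟩
  | 1 => ⟨1, (0 : Fin 3)⟩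
  | 2 => ⟨1, (1 : Fin 3)⟩
  | 3 => ⟨1, (2 : Fin 3)⟩
  | 4 => ⟨2, (0 : Fin 3)⟩
  | 5 => ⟨2, (1 : Fin 3)⟩
  | 6 => ⟨2, (2 : Fin 3)⟩

def eg : (j : Fin 3) × MM j → Fin 7
  | ⟨0, _⟩ => 0
  | ⟨1, v⟩ => ⟨1 + v.val, by have := v.isLt; omega⟩
  | ⟨2, v⟩ => ⟨4 + v.val, by have := v.isLt; omega⟩

def e7 : Fin 7 ≃ (j : Fin 3) × MM j where
  toFun := ef
  invFun := eg
  left_inv := by decide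
  right_inv := by decide

lemma iso7 : Nonempty (GG7 ≃g K133) := ⟨⟨e7, by decide⟩⟩

lemma homeoChain : Homeo ⟨Fin 16, GG16⟩
    ⟨(i : Fin 3) × ![Fin 1, Fin 3, Fin 3] i,
      SimpleGraph.completeMultipartiteGraph ![Fin 1, Fin 3, Fin 3]⟩ := by
  have r : ∀ {A B}, (SubdivStep A B ∨ Nonempty (A.G ≃g B.G)) → Homeo A B :=
    fun h => Relation.EqvGen.rel _ _ h
  have s : ∀ {A B}, Homeo A B → Homeo B A := fun h => Relation.EqvGen.symm _ _ h
  have t : ∀ {A B C}, Homeo A B → Homeo B C → Homeo A C :=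
    fun h1 h2 => Relation.EqvGen.trans _ _ _ h1 h2
  exact t (s (r (Or.inl step16))) (t (s (r (Or.inl step15))) (t (s (r (Or.inl step14))) (t (s (r (Or.inl step13))) (t (s (r (Or.inl step12))) (t (s (r (Or.inl step11))) (t (s (r (Or.inl step10))) (t (s (r (Or.inl step9))) (t (s (r (Or.inl step8))) (r (Or.inr iso7))))))))))


def encE : Fin 16 ≃ Fin 4 × (Fin 1 ⊕ Fin 3) where
  toFun := ![(0,.inl 0),(0,.inr 0),(0,.inr 1),(0,.inr 2),(1,.inl 0),(2,.inl 0),(3,.inl 0),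
    (1,.inr 0),(1,.inr 1),(1,.inr 2),(2,.inr 0),(2,.inr 1),(2,.inr 2),(3,.inr 0),(3,.inr 1),(3,.inr 2)]
  invFun w := match w with
    | (0, .inl _) => 0
    | (0, .inr j) => ⟨1 + j.val, by have := j.isLt; omega⟩
    | (1, .inl _) => 4
    | (2, .inl _) => 5
    | (3, .inl _) => 6
    | (1, .inr j) => ⟨7 + j.val, by have := j.isLt; omega⟩
    | (2, .inr j) => ⟨10 + j.val, by have := j.isLt; omega⟩
    | (3, .inr j) => ⟨13 + j.val, by have := j.isLt; omega⟩
  left_inv := by decide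
  right_inv := by decide

def col (n : ℕ) (i : Fin n) : Fin 4 → Fin n × Bool :=
  ![(i,false),(i,true),(finSucc i,false),(finPred i,false)]

def phi (n : ℕ) (i : Fin n) (k : Fin 16) : (Fin n × Bool) × (Fin 1 ⊕ Fin 3) :=
  (col n i (encE k).1, (encE k).2)

def Q (c1 : Fin 4) (v1 : Fin 1 ⊕ Fin 3) (c2 : Fin 4) (v2 : Fin 1 ⊕ Fin 3) : Prop :=
  (∃ v, (c1 = 0 ∧ v1 = v) ∧ c2 = 2 ∧ v2 = v ∨ (c1 = 2 ∧ v1 = v) ∧ c2 = 0 ∧ v2 = v) ∨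
  (∃ v, (c1 = 0 ∧ v1 = v) ∧ c2 = 1 ∧ v2 = v ∨ (c1 = 1 ∧ v1 = v) ∧ c2 = 0 ∧ v2 = v) ∨
  (∃ j : Fin 3, (c1 = 1 ∧ v1 = Sum.inl 0) ∧ c2 = 1 ∧ v2 = Sum.inr j ∨
    (c1 = 1 ∧ v1 = Sum.inr j) ∧ c2 = 1 ∧ v2 = Sum.inl 0) ∨
  (∃ v, (c1 = 0 ∧ v1 = v) ∧ c2 = 3 ∧ v2 = v ∨ (c1 = 3 ∧ v1 = v) ∧ c2 = 0 ∧ v2 = v) ∨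
  (∃ j : Fin 3, (c1 = 0 ∧ v1 = Sum.inl 0) ∧ c2 = 0 ∧ v2 = Sum.inr j ∨
    (c1 = 0 ∧ v1 = Sum.inr j) ∧ c2 = 0 ∧ v2 = Sum.inl 0) ∨
  (∃ j : Fin 3, (c1 = 2 ∧ v1 = Sum.inl 0) ∧ c2 = 2 ∧ v2 = Sum.inr j ∨
    (c1 = 2 ∧ v1 = Sum.inr j) ∧ c2 = 2 ∧ v2 = Sum.inl 0) ∨
  (∃ j : Fin 3, (c1 = 3 ∧ v1 = Sum.inl 0) ∧ c2 = 3 ∧ v2 = Sum.inr j ∨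
    (c1 = 3 ∧ v1 = Sum.inr j) ∧ c2 = 3 ∧ v2 = Sum.inl 0)

set_option synthInstance.maxSize 2000 in
instance decQ (c1 : Fin 4) (v1 : Fin 1 ⊕ Fin 3) (c2 : Fin 4) (v2 : Fin 1 ⊕ Fin 3) :
    Decidable (Q c1 v1 c2 v2) := by unfold Q; infer_instance

set_option maxRecDepth 10000 in
lemma QG : ∀ a b : Fin 16, GG16.Adj a b ↔
    (Q (encE a).1 (encE a).2 (encE b).1 (encE b).2 ∧ a ≠ b) := by decide

def nbf : Fin 16 → Fin 16 := ![1,0,0,0,0,0,0,1,2,3,1,2,3,1,2,3]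

lemma nbAdj : ∀ a : Fin 16, GG16.Adj a (nbf a) := by decide

end Aux

theorem stmt12 (n : ℕ) (hn : 3 ≤ n) (i : Fin n) :
    let E := aSet n 3 i ∪ bSet n 3 i ∪ bpSet n 3 i ∪ cSet n 3 i ∪
      tSet n 3 i ∪ tSet n 3 (finSucc i) ∪ tSet n 3 (finPred i)
    let H := SimpleGraph.fromEdgeSet E
    H ≤ (sunlet n).boxProd (_root_.starGraph 3) ∧
    Homeo ⟨↥H.support, H.induce H.support⟩
      ⟨(i : Fin 3) × ![Fin 1, Fin 3, Fin 3] i,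
        SimpleGraph.completeMultipartiteGraph ![Fin 1, Fin 3, Fin 3]⟩ := by
  intro E H
  have hE : E = aSet n 3 i ∪ bSet n 3 i ∪ bpSet n 3 i ∪ cSet n 3 i ∪
      tSet n 3 i ∪ tSet n 3 (finSucc i) ∪ tSet n 3 (finPred i) := rfl
  have hH : H = SimpleGraph.fromEdgeSet E := rfl
  haveI : NeZero n := ⟨by omega⟩
  set c : Fin n := ⟨1 % n, Nat.mod_lt 1 i.pos⟩ with hc
  have hcval : c.val = 1 := Nat.mod_eq_of_lt (by omega)
  have hc0 : c ≠ 0 := by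
    intro h; rw [Fin.ext_iff] at h; rw [hcval] at h; simp at h
  have hcc : c + c ≠ 0 := by
    intro h; rw [Fin.ext_iff, Fin.val_add, hcval] at h
    rw [Nat.mod_eq_of_lt (by omega)] at h; simp at h
  have hsi : finSucc i ≠ i := by
    intro h; exact hc0 (by rwa [finSucc, ← hc, add_eq_left] at h)
  have hpi : finPred i ≠ i := by
    intro h; exact hc0 (by rwa [finPred, ← hc, sub_eq_self] at h)
  have hsp : finSucc i ≠ finPred i := by
    intro h
    rw [finSucc, finPred, ← hc] at h
    apply hcc
    have h2 : i + (c + c) = i := by rw [← add_assoc, h, sub_add_cancel]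
    rwa [add_eq_left] at h2
  have hsv : (finSucc i).val = (i.val + 1) % n := by
    rw [finSucc, ← hc, Fin.val_add, hcval]
  have hpv : i.val = ((finPred i).val + 1) % n := by
    have h2 : finPred i + c = i := by rw [finPred, ← hc, sub_add_cancel]
    conv_lhs => rw [← h2]
    rw [Fin.val_add, hcval]
  have hcol : Function.Injective (col n i) := by
    intro a b h
    fin_cases a <;> fin_cases b <;>
      first
      | rfl
      | exact Bool.noConfusion (congrArg Prod.snd h)
      | exact absurd (congrArg Prod.fst h) hsi
      | exact absurd (congrArg Prod.fst h) (Ne.symm hsi)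
      | exact absurd (congrArg Prod.fst h) hpi
      | exact absurd (congrArg Prod.fst h) (Ne.symm hpi)
      | exact absurd (congrArg Prod.fst h) hsp
      | exact absurd (congrArg Prod.fst h) (Ne.symm hsp)
  have memE : ∀ (c1 c2 : Fin 4) (v1 v2 : Fin 1 ⊕ Fin 3),
      s((col n i c1, v1), (col n i c2, v2)) ∈ E ↔ Q c1 v1 c2 v2 := by
    intro c1 c2 v1 v2
    have ha : aSet n 3 i = {e | ∃ v, e = s((col n i 0, v), (col n i 2, v))} := rfl
    have hb : bSet n 3 i = {e | ∃ v, e = s((col n i 0, v), (col n i 1, v))} := rfl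
    have hbp : bpSet n 3 i = {e | ∃ j : Fin 3, e = s((col n i 1, .inl 0), (col n i 1, .inr j))} := rfl
    have hcs : cSet n 3 i = {e | ∃ v, e = s((col n i 0, v), (col n i 3, v))} := rfl
    have ht : tSet n 3 i = {e | ∃ j : Fin 3, e = s((col n i 0, .inl 0), (col n i 0, .inr j))} := rfl
    have hts : tSet n 3 (finSucc i) = {e | ∃ j : Fin 3, e = s((col n i 2, .inl 0), (col n i 2, .inr j))} := rfl
    have htp : tSet n 3 (finPred i) = {e | ∃ j : Fin 3, e = s((col n i 3, .inl 0), (col n i 3, .inr j))} := rfl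
    rw [hE, ha, hb, hbp, hcs, ht, hts, htp]
    simp only [Set.mem_union, Set.mem_setOf_eq, Sym2.eq_iff, Prod.mk.injEq, hcol.eq_iff, Q,
      or_assoc]
  have hphi : Function.Injective (phi n i) := by
    intro a b h
    have h1 := congrArg Prod.fst h
    have h2 := congrArg Prod.snd h
    exact encE.injective (Prod.ext_iff.mpr ⟨hcol h1, h2⟩)
  have key : ∀ a b : Fin 16, H.Adj (phi n i a) (phi n i b) ↔ GG16.Adj a b := by
    intro a b
    rw [hH, SimpleGraph.fromEdgeSet_adj, QG]
    constructor
    · rintro ⟨hm, hne⟩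
      exact ⟨(memE _ _ _ _).mp hm, fun h => hne (congrArg (phi n i) h)⟩
    · rintro ⟨hq, hne⟩
      exact ⟨(memE _ _ _ _).mpr hq, fun h => hne (hphi h)⟩
  have hrange : ∀ (cc : Fin 4) (v : Fin 1 ⊕ Fin 3), (col n i cc, v) ∈ Set.range (phi n i) := by
    intro cc v
    exact ⟨encE.symm (cc, v), by simp [phi]⟩
  have hsupp : H.support = Set.range (phi n i) := by
    ext x
    constructor
    · rintro ⟨w, hxw⟩
      change H.Adj x w at hxw
      rw [hH, SimpleGraph.fromEdgeSet_adj, hE] at hxw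
      obtain ⟨hm, -⟩ := hxw
      rcases hm with ((((((⟨v, hv⟩ | ⟨v, hv⟩) | ⟨j, hv⟩) | ⟨v, hv⟩) | ⟨j, hv⟩) | ⟨j, hv⟩) | ⟨j, hv⟩) <;>
        rcases Sym2.eq_iff.mp hv with ⟨hx, -⟩ | ⟨hx, -⟩ <;> rw [hx]
      exacts [hrange 0 v, hrange 2 v, hrange 0 v, hrange 1 v, hrange 1 (.inl 0),
        hrange 1 (.inr j), hrange 0 v, hrange 3 v, hrange 0 (.inl 0), hrange 0 (.inr j),
        hrange 2 (.inl 0), hrange 2 (.inr j), hrange 3 (.inl 0), hrange 3 (.inr j)]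
    · rintro ⟨a, rfl⟩
      exact ⟨phi n i (nbf a), (key a (nbf a)).mpr (nbAdj a)⟩
  constructor
  · -- H ≤ product
    have S1 : (sunlet n).Adj (i, false) (finSucc i, false) := by
      rw [sunlet, SimpleGraph.fromRel_adj]
      exact ⟨fun h => hsi (congrArg Prod.fst h).symm, Or.inl (Or.inl ⟨rfl, rfl, hsv⟩)⟩
    have S2 : (sunlet n).Adj (i, false) (i, true) := by
      rw [sunlet, SimpleGraph.fromRel_adj]
      exact ⟨fun h => by simpa using congrArg Prod.snd h, Or.inl (Or.inr ⟨rfl, rfl, rfl⟩)⟩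
    have S3 : (sunlet n).Adj (i, false) (finPred i, false) := by
      rw [sunlet, SimpleGraph.fromRel_adj]
      exact ⟨fun h => hpi (congrArg Prod.fst h).symm, Or.inr (Or.inl ⟨rfl, rfl, hpv⟩)⟩
    have ST : ∀ j : Fin 3, (_root_.starGraph 3).Adj (Sum.inl 0) (Sum.inr j) := by
      intro j
      exact Or.inl ⟨by simp, by simp⟩
    intro x y hxy
    rw [hH, SimpleGraph.fromEdgeSet_adj, hE] at hxy
    obtain ⟨hm, -⟩ := hxy
    rw [SimpleGraph.boxProd_adj]
    rcases hm with ((((((⟨v, hv⟩ | ⟨v, hv⟩) | ⟨j, hv⟩) | ⟨v, hv⟩) | ⟨j, hv⟩) | ⟨j, hv⟩) | ⟨j, hv⟩) <;>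
      rcases Sym2.eq_iff.mp hv with ⟨hx, hy⟩ | ⟨hx, hy⟩ <;> rw [hx, hy]
    exacts [Or.inl ⟨S1, rfl⟩, Or.inl ⟨S1.symm, rfl⟩,
      Or.inl ⟨S2, rfl⟩, Or.inl ⟨S2.symm, rfl⟩,
      Or.inr ⟨ST j, rfl⟩, Or.inr ⟨(ST j).symm, rfl⟩,
      Or.inl ⟨S3, rfl⟩, Or.inl ⟨S3.symm, rfl⟩,
      Or.inr ⟨ST j, rfl⟩, Or.inr ⟨(ST j).symm, rfl⟩,
      Or.inr ⟨ST j, rfl⟩, Or.inr ⟨(ST j).symm, rfl⟩,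
      Or.inr ⟨ST j, rfl⟩, Or.inr ⟨(ST j).symm, rfl⟩]
  · -- Homeo
    have iso : GG16 ≃g H.induce H.support :=
      ⟨(Equiv.ofInjective (phi n i) hphi).trans (Equiv.setCongr hsupp.symm),
        fun {a b} => key a b⟩
    have step0 : Homeo ⟨↥H.support, H.induce H.support⟩ ⟨Fin 16, GG16⟩ :=
      Relation.EqvGen.rel _ _ (Or.inr ⟨iso.symm⟩)
    exact Relation.EqvGen.trans _ _ _ step0 homeoChain
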